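/- Let n ≥ 1 and let U be a nonempty upset of a De Morgan lattice L. Then Cons(fgₙ(U)) is the almost consistent n-filter generated by U: it is an almost consistent n-filter containing U, and it is contained in every almost consistent n-filter on L that contains U. -/

import Mathlib

/-- A De Morgan lattice: a distributive lattice with an antitone involution. -/
class DeMorgan (L : Type*) extends DistribLattice L where
  dneg : L → L
  dneg_dneg : ∀ x : L, dneg (dneg x) = x
  dneg_sup : ∀ x y : L, dneg (x ⊔ y) = dneg x ⊓ dneg y

prefix:max "∼" => DeMorgan.dneg

section Defs

variable {α : Type*}

/-- An upward closed subset of a lattice. -/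
def IsUpset [Lattice α] (F : Set α) : Prop :=
  ∀ ⦃x y : α⦄, x ∈ F → x ≤ y → y ∈ F

/-- A lattice filter: an upset closed under binary meets. -/
def IsLatFilter [Lattice α] (F : Set α) : Prop :=
  IsUpset F ∧ ∀ x y : α, x ∈ F → y ∈ F → x ⊓ y ∈ F

/-- An `n`-filter: an upset such that for every nonempty finite `Y`, if the meet of
every nonempty subset of `Y` of size at most `n` lies in `F`, then so does the meet of `Y`. -/
def IsNFilter [Lattice α] (n : ℕ) (F : Set α) : Prop :=
  IsUpset F ∧ ∀ (Y : Finset α) (hY : Y.Nonempty),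
    (∀ (X : Finset α) (hX : X.Nonempty), X ⊆ Y → X.card ≤ n → X.inf' hX id ∈ F) →
    Y.inf' hY id ∈ F

/-- A prime upset: `x ⊔ y ∈ F` implies `x ∈ F` or `y ∈ F`. -/
def IsPrimeUpset [Lattice α] (F : Set α) : Prop :=
  ∀ x y : α, x ⊔ y ∈ F → x ∈ F ∨ y ∈ F

/-- A downward closed subset of a lattice. -/
def IsDownset [Lattice α] (I : Set α) : Prop :=
  ∀ ⦃x y : α⦄, x ∈ I → y ≤ x → y ∈ I

/-- A lattice ideal: a downset closed under binary joins. -/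
def IsIdeal [Lattice α] (I : Set α) : Prop :=
  IsDownset I ∧ ∀ x y : α, x ∈ I → y ∈ I → x ⊔ y ∈ I

/-- An `n`-ideal: the order dual notion of an `n`-filter. -/
def IsNIdeal [Lattice α] (n : ℕ) (I : Set α) : Prop :=
  IsDownset I ∧ ∀ (Y : Finset α) (hY : Y.Nonempty),
    (∀ (X : Finset α) (hX : X.Nonempty), X ⊆ Y → X.card ≤ n → X.sup' hX id ∈ I) →
    Y.sup' hY id ∈ I

variable {L : Type*} [DeMorgan L]

/-- Almost complete upset: `x ∈ F` implies `x ⊓ (y ⊔ ∼y) ∈ F`. -/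
def AlmostComplete (F : Set L) : Prop := ∀ x ∈ F, ∀ y : L, x ⊓ (y ⊔ ∼y) ∈ F

/-- Complete upset: almost complete and nonempty. -/
def IsCompleteUpset (F : Set L) : Prop := AlmostComplete F ∧ F.Nonempty

/-- Almost consistent upset: `(x ⊓ ∼x) ⊔ y ∈ F` implies `y ∈ F`. -/
def AlmostConsistent (F : Set L) : Prop := ∀ x y : L, (x ⊓ ∼x) ⊔ y ∈ F → y ∈ F

/-- Consistent upset: almost consistent and not total. -/
def IsConsistentUpset (F : Set L) : Prop := AlmostConsistent F ∧ F ≠ Set.univ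

/-- Classical upset: complete and consistent. -/
def IsClassicalUpset (F : Set L) : Prop := IsCompleteUpset F ∧ IsConsistentUpset F

/-- Kalman upset. -/
def IsKalmanUpset (F : Set L) : Prop :=
  ∀ x y z u : L, ((x ⊓ ∼x) ⊓ z) ⊔ u ∈ F → ((y ⊔ ∼y) ⊓ z) ⊔ u ∈ F

/-- A homomorphism of De Morgan lattices. -/
def IsDMHom {L M : Type*} [DeMorgan L] [DeMorgan M] (h : L → M) : Prop :=
  (∀ x y : L, h (x ⊓ y) = h x ⊓ h y) ∧ (∀ x y : L, h (x ⊔ y) = h x ⊔ h y) ∧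
    ∀ x : L, h (∼x) = ∼(h x)

/-- The filter generated by all elements of the form `x ⊔ ∼x`. -/
def Fcomp (L : Type*) [DeMorgan L] : Set L :=
  {a | ∃ (s : Finset L) (hs : s.Nonempty), s.inf' hs (fun x => x ⊔ ∼x) ≤ a}

/-- The `n`-filter generated by a set. -/
def nFilterGen (n : ℕ) (U : Set L) : Set L :=
  ⋂₀ {F : Set L | IsNFilter n F ∧ U ⊆ F}

/-- `Comp U`. -/
def CompCl (U : Set L) : Set L := {x | ∃ a ∈ U, ∃ f ∈ Fcomp L, a ⊓ f ≤ x}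

/-- `Cons U`. -/
def ConsCl (U : Set L) : Set L := {x | ∃ f ∈ Fcomp L, ∼f ⊔ x ∈ U}

/-- A congruence of De Morgan lattices, as a binary relation. -/
def IsCongruence (θ : L → L → Prop) : Prop :=
  Equivalence θ ∧
  (∀ a b c d : L, θ a b → θ c d → θ (a ⊓ c) (b ⊓ d)) ∧
  (∀ a b c d : L, θ a b → θ c d → θ (a ⊔ c) (b ⊔ d)) ∧
  ∀ a b : L, θ a b → θ (∼a) (∼b)

end Defs

/-- The four-element De Morgan lattice `DM₁` on `Bool × Bool`. -/
instance : DeMorgan (Bool × Bool) :=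
  { (inferInstance : DistribLattice (Bool × Bool)) with
    dneg := fun p => (!p.2, !p.1)
    dneg_dneg := by decide
    dneg_sup := by decide }

/-- Powers of `DM₁`, with componentwise operations. -/
instance {ι : Type*} : DeMorgan (ι → Bool × Bool) :=
  { (inferInstance : DistribLattice (ι → Bool × Bool)) with
    dneg := fun f i => ∼(f i)
    dneg_dneg := fun f => funext fun i => DeMorgan.dneg_dneg (f i)
    dneg_sup := fun f g => funext fun i => DeMorgan.dneg_sup (f i) (g i) }


section Aux

variable {L : Type*} [DeMorgan L]

lemma dneg_anti {x y : L} (h : x ≤ y) : ∼y ≤ ∼x := by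
  have h2 : ∼(x ⊔ y) = ∼x ⊓ ∼y := DeMorgan.dneg_sup x y
  rw [sup_eq_right.mpr h] at h2
  rw [h2]; exact inf_le_left

lemma dneg_inf' (x y : L) : ∼(x ⊓ y) = ∼x ⊔ ∼y := by
  have h := DeMorgan.dneg_sup (∼x) (∼y)
  rw [DeMorgan.dneg_dneg, DeMorgan.dneg_dneg] at h
  have := congrArg (∼·) h
  simpa [DeMorgan.dneg_dneg] using this.symm

lemma sup_finset_inf' {ι : Type*} (a : L) (s : Finset ι) (hs : s.Nonempty) (f : ι → L) :
    a ⊔ s.inf' hs f = s.inf' hs (fun i => a ⊔ f i) := by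
  induction hs using Finset.Nonempty.cons_induction with
  | singleton b => simp
  | cons b t hb ht ih => rw [Finset.inf'_cons (H := ht), Finset.inf'_cons (H := ht), sup_inf_left, ih]

lemma dneg_finset_inf' {ι : Type*} (s : Finset ι) (hs : s.Nonempty) (f : ι → L) :
    ∼(s.inf' hs f) = s.sup' hs (fun i => ∼(f i)) := by
  induction hs using Finset.Nonempty.cons_induction with
  | singleton b => simp
  | cons b t hb ht ih => rw [Finset.inf'_cons (H := ht), Finset.sup'_cons (H := ht), dneg_inf', ih]

lemma mem_fcomp_self (x : L) : x ⊔ ∼x ∈ Fcomp L :=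
  ⟨{x}, Finset.singleton_nonempty x, by simp⟩

lemma fcomp_upset : IsUpset (Fcomp L) := by
  rintro x y ⟨s, hs, hle⟩ hxy
  exact ⟨s, hs, hle.trans hxy⟩

lemma fcomp_inf {x y : L} (hx : x ∈ Fcomp L) (hy : y ∈ Fcomp L) : x ⊓ y ∈ Fcomp L := by
  classical
  obtain ⟨s, hs, hsle⟩ := hx
  obtain ⟨t, ht, htle⟩ := hy
  refine ⟨s ∪ t, hs.mono Finset.subset_union_left, ?_⟩
  rw [Finset.inf'_union hs ht]
  exact inf_le_inf hsle htle

lemma fcomp_inf'_mem {ι : Type*} (s : Finset ι) (hs : s.Nonempty) (g : ι → L)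
    (h : ∀ i ∈ s, g i ∈ Fcomp L) : s.inf' hs g ∈ Fcomp L :=
  Finset.inf'_induction hs g (fun _ ha _ hb => fcomp_inf ha hb) h

lemma dneg_fcomp_elim {G : Set L} (hG : IsUpset G) (hGac : AlmostConsistent G)
    {f x : L} (hf : f ∈ Fcomp L) (hmem : ∼f ⊔ x ∈ G) : x ∈ G := by
  obtain ⟨s, hs, hsle⟩ := hf
  have h1 : ∼f ≤ s.sup' hs (fun z => ∼(z ⊔ ∼z)) := by
    rw [← dneg_finset_inf']
    exact dneg_anti hsle
  have h2 : s.sup' hs (fun z => ∼(z ⊔ ∼z)) ⊔ x ∈ G :=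
    hG hmem (sup_le_sup_right h1 x)
  clear hmem h1 hsle
  induction hs using Finset.Nonempty.cons_induction with
  | singleton b =>
    rw [Finset.sup'_singleton, DeMorgan.dneg_sup] at h2
    exact hGac (∼b) x h2
  | cons b t hb ht ih =>
    rw [Finset.sup'_cons (H := ht), DeMorgan.dneg_sup, sup_assoc] at h2
    exact ih (hGac (∼b) _ h2)

lemma nFilterGen_isNFilter (n : ℕ) (U : Set L) : IsNFilter n (nFilterGen n U) := by
  constructor
  · intro x y hx hxy F hF
    exact hF.1.1 (hx F hF) hxy
  · intro Y hY h F hF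
    exact hF.1.2 Y hY (fun X hX hXY hXc => h X hX hXY hXc F hF)

lemma subset_nFilterGen (n : ℕ) (U : Set L) : U ⊆ nFilterGen n U :=
  fun _ hx _ hF => hF.2 hx

lemma consCl_isNFilter (n : ℕ) (hn : 1 ≤ n) {F : Set L} (hF : IsNFilter n F) :
    IsNFilter n (ConsCl F) := by
  classical
  constructor
  · rintro x y ⟨f, hf, hfx⟩ hxy
    exact ⟨f, hf, hF.1 hfx (sup_le_sup_left hxy _)⟩
  · intro Y hY h
    set S := Y.powerset.filter (fun X => X.Nonempty ∧ X.card ≤ n) with hSdef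
    have hSmem : ∀ X : Finset L, X ∈ S ↔ X ⊆ Y ∧ X.Nonempty ∧ X.card ≤ n := by
      intro X; simp [hSdef, Finset.mem_filter, Finset.mem_powerset]
    have hSne : S.Nonempty := by
      obtain ⟨y, hy⟩ := hY
      exact ⟨{y}, (hSmem {y}).mpr ⟨Finset.singleton_subset_iff.mpr hy,
        Finset.singleton_nonempty y, by simpa using hn⟩⟩
    have key : ∀ X : {X // X ∈ S},
        ∃ f, f ∈ Fcomp L ∧ ∀ hX : X.1.Nonempty, ∼f ⊔ X.1.inf' hX id ∈ F := by
      rintro ⟨X, hX⟩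
      obtain ⟨hXY, hXne, hXc⟩ := (hSmem X).mp hX
      obtain ⟨f, hf, hfx⟩ := h X hXne hXY hXc
      exact ⟨f, hf, fun _ => hfx⟩
    choose φ hφ1 hφ2 using key
    have hSa : S.attach.Nonempty := Finset.attach_nonempty_iff.mpr hSne
    set f := S.attach.inf' hSa φ with hfdef
    have hfF : f ∈ Fcomp L := fcomp_inf'_mem _ _ _ (fun X _ => hφ1 X)
    refine ⟨f, hfF, ?_⟩
    set g : L → L := fun y => ∼f ⊔ y with hgdef
    have hsmall : ∀ (X' : Finset L) (hX' : X'.Nonempty),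
        X' ⊆ Y.image g → X'.card ≤ n → X'.inf' hX' id ∈ F := by
      intro X' hX' hsub hcard
      have hpre : ∀ b : {b // b ∈ X'}, ∃ a, a ∈ Y ∧ g a = b.1 := by
        rintro ⟨b, hb⟩
        obtain ⟨a, ha, hab⟩ := Finset.mem_image.mp (hsub hb)
        exact ⟨a, ha, hab⟩
      choose ψ hψY hψg using hpre
      set X := X'.attach.image ψ with hXdef
      have hXY : X ⊆ Y := by
        intro a ha
        obtain ⟨b, _, rfl⟩ := Finset.mem_image.mp ha
        exact hψY b
      have hXne : X.Nonempty := (Finset.attach_nonempty_iff.mpr hX').image ψ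
      have hXcard : X.card ≤ n :=
        (Finset.card_image_le).trans (by rw [Finset.card_attach]; exact hcard)
      have hXS : X ∈ S := (hSmem X).mpr ⟨hXY, hXne, hXcard⟩
      have h1 : ∼(φ ⟨X, hXS⟩) ⊔ X.inf' hXne id ∈ F := hφ2 ⟨X, hXS⟩ hXne
      have h2 : f ≤ φ ⟨X, hXS⟩ := Finset.inf'_le _ (Finset.mem_attach _ _)
      have h4 : ∼f ⊔ X.inf' hXne id ∈ F :=
        hF.1 h1 (sup_le_sup_right (dneg_anti h2) _)
      have hXg : X.image g = X' := by
        rw [hXdef, Finset.image_image]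
        have : ∀ b ∈ X'.attach, (g ∘ ψ) b = (Subtype.val) b := fun b _ => hψg b
        rw [Finset.image_congr (fun b hb => this b hb), Finset.attach_image_val]
      have heq : X'.inf' hX' id = ∼f ⊔ X.inf' hXne id := by
        refine (Finset.inf'_congr hX' hXg.symm (fun _ _ => rfl)).trans ?_
        rw [Finset.inf'_image, sup_finset_inf']
        rfl
      rw [heq]; exact h4
    have hmain := hF.2 (Y.image g) (hY.image g) hsmall
    have heq2 : (Y.image g).inf' (hY.image g) id = ∼f ⊔ Y.inf' hY id := by
      rw [Finset.inf'_image, sup_finset_inf']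
      rfl
    rw [heq2] at hmain
    exact hmain

end Aux

/-- `Cons (fgₙ U)` is the almost consistent `n`-filter generated by `U`. -/
theorem statement16 {L : Type*} [DeMorgan L] [Nonempty L] (n : ℕ) (hn : 1 ≤ n)
    (U : Set L) (hU : IsUpset U) (hne : U.Nonempty) :
    (IsNFilter n (ConsCl (nFilterGen n U)) ∧ AlmostConsistent (ConsCl (nFilterGen n U))) ∧
    U ⊆ ConsCl (nFilterGen n U) ∧
    ∀ G : Set L, IsNFilter n G → AlmostConsistent G → U ⊆ G →
      ConsCl (nFilterGen n U) ⊆ G := by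
  have hFgen : IsNFilter n (nFilterGen n U) := nFilterGen_isNFilter n U
  have hsub : nFilterGen n U ⊆ ConsCl (nFilterGen n U) := by
    intro x hx
    refine ⟨x ⊔ ∼x, mem_fcomp_self x, ?_⟩
    have : ∼(x ⊔ ∼x) ⊔ x = x := by
      rw [DeMorgan.dneg_sup, DeMorgan.dneg_dneg, inf_comm, sup_comm, sup_inf_self]
    rwa [this]
  refine ⟨⟨consCl_isNFilter n hn hFgen, ?_⟩, ?_, ?_⟩
  · rintro x y ⟨f, hf, hmem⟩
    refine ⟨f ⊓ (x ⊔ ∼x), fcomp_inf hf (mem_fcomp_self x), ?_⟩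
    rwa [dneg_inf', DeMorgan.dneg_sup, DeMorgan.dneg_dneg, inf_comm, sup_assoc]
  · exact (subset_nFilterGen n U).trans hsub
  · intro G hG hGac hUG
    have hsubG : nFilterGen n U ⊆ G := fun x hx => hx G ⟨hG, hUG⟩
    rintro x ⟨f, hf, hmem⟩
    exact dneg_fcomp_elim hG.1 hGac hf (hsubG hmem)
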